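/- Let A be a complex unital Banach algebra, p : ℝ → A a continuously differentiable path of idempotents (p(t)² = p(t) for all t), and v : ℝ → A a differentiable solution of the monodromy equation v'(t) = [p'(t), p(t)]·v(t) with v(0) = p(0). Then for all t ∈ ℝ: p(t)·v(t) = v(t) and v(t)·p(0) = v(t). In particular, for a homomorphism-quotient situation this gives w·(1 − q(0)) = 0 for the monodromy w of a path of projections q. -/

import Mathlib

open Set

lemma ode_unique_lin {A : Type*} [NormedRing A] [NormedSpace ℝ A]
    (G : ℝ → A) (hG : Continuous G)
    (f g : ℝ → A)
    (hf : ∀ t, HasDerivAt f (G t * f t) t)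
    (hg : ∀ t, HasDerivAt g (G t * g t) t)
    (h0 : f 0 = g 0) : ∀ t, f t = g t := by
  intro t
  set T : ℝ := |t| + 1 with hT
  have hT1 : (1:ℝ) ≤ T := by have := abs_nonneg t; linarith
  have hab : (-T : ℝ) < T := by linarith
  -- bound on G over the compact interval
  obtain ⟨C, hC⟩ : ∃ C, ∀ s ∈ Icc (-T) T, ‖G s‖ ≤ C := by
    exact (isCompact_Icc (a := -T) (b := T)).exists_bound_of_continuousOn hG.continuousOn
  have hC0 : 0 ≤ C := le_trans (norm_nonneg _) (hC 0 ⟨by linarith, by linarith⟩)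
  -- truncated coefficient
  set π : ℝ → ℝ := fun s => max (-T) (min T s) with hπ
  have hπmem : ∀ s, π s ∈ Icc (-T) T := fun s =>
    ⟨le_max_left _ _, max_le (le_of_lt hab) (min_le_left _ _)⟩
  have hπeq : ∀ s ∈ Ioo (-T) T, π s = s := by
    intro s hs
    simp only [hπ]
    rw [min_eq_right hs.2.le, max_eq_right hs.1.le]
  set w : ℝ → A → A := fun s x => G (π s) * x with hw
  have hlip : ∀ s, LipschitzWith C.toNNReal (w s) := by
    intro s
    apply LipschitzWith.of_dist_le_mul
    intro x y
    rw [dist_eq_norm, dist_eq_norm, ← mul_sub]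
    calc ‖G (π s) * (x - y)‖ ≤ ‖G (π s)‖ * ‖x - y‖ := norm_mul_le _ _
      _ ≤ C * ‖x - y‖ := by
          gcongr
          exact hC _ (hπmem s)
      _ = Real.toNNReal C * ‖x-y‖ := by rw [Real.coe_toNNReal _ hC0]
  have h0mem : (0:ℝ) ∈ Ioo (-T) T := ⟨by linarith, by linarith⟩
  have key : EqOn f g (Icc (-T) T) := by
    apply ODE_solution_unique_of_mem_Icc (v := w) (s := fun _ => univ)
      (fun s _ => (hlip s).lipschitzOnWith) h0mem
      (fun s _ => (hf s).continuousAt.continuousWithinAt)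
      (fun s hs => by rw [hw]; simp only; rw [hπeq s hs]; exact hf s)
      (fun _ _ => trivial)
      (fun s _ => (hg s).continuousAt.continuousWithinAt)
      (fun s hs => by rw [hw]; simp only; rw [hπeq s hs]; exact hg s)
      (fun _ _ => trivial) h0
  exact key ⟨neg_le_of_abs_le (by linarith [le_abs_self t, abs_nonneg t, neg_abs_le t]), by
    have := le_abs_self t; linarith⟩

lemma idem_aux {A : Type*} [Ring A] (e d x : A) (he : e * e = e)
    (hd : d = d * e + e * d) :
    d * x + e * ((d * e - e * d) * x) = (d * e - e * d) * (e * x) := by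
  have h0 : e * d * e = 0 := by
    have h1 : e * d * e = e * (d * e + e * d) * e := by rw [← hd]
    have h2 : e * (d * e + e * d) * e = e * d * e + e * d * e := by
      rw [mul_add, add_mul]
      simp only [← mul_assoc]
      rw [mul_assoc (e*d) e e, he]
    exact (left_eq_add.mp (h1.trans h2)).symm ▸ rfl
  have hRHS : (d * e - e * d) * (e * x) = d * e * x := by
    rw [sub_mul]
    simp only [← mul_assoc]
    rw [mul_assoc d e e, he, h0, zero_mul, sub_zero]
  have hLHS : d * x + e * ((d * e - e * d) * x) = d * x - e * d * x := by
    rw [sub_mul, mul_sub]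
    simp only [← mul_assoc]
    rw [h0, zero_mul, he]
    abel
  rw [hLHS, hRHS]
  have : d * x = d * e * x + e * d * x := by
    conv_lhs => rw [hd]
    rw [add_mul]
  rw [this]
  abel

/-- **Range identities for the monodromy of a path of idempotents.**
Let `A` be a complex unital Banach algebra, `p : ℝ → A` a continuously differentiable
path of idempotents (`p(t)² = p(t)`), and `v : ℝ → A` a differentiable solution of the
monodromy equation `v'(t) = [p'(t), p(t)]·v(t)` with `v(0) = p(0)`.  Then for all `t`:
`p(t)·v(t) = v(t)` and `v(t)·p(0) = v(t)`. -/
theorem monodromy_range_identities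
    {A : Type*} [NormedRing A] [NormedAlgebra ℂ A] [CompleteSpace A]
    (p : ℝ → A) (hp : ContDiff ℝ 1 p) (hidem : ∀ t : ℝ, p t * p t = p t)
    (v : ℝ → A)
    (hv : ∀ t : ℝ, HasDerivAt v ((deriv p t * p t - p t * deriv p t) * v t) t)
    (hv0 : v 0 = p 0) :
    ∀ t : ℝ, p t * v t = v t ∧ v t * p 0 = v t := by
  set G : ℝ → A := fun t => deriv p t * p t - p t * deriv p t with hGdef
  have hG : Continuous G :=
    ((hp.continuous_deriv le_rfl).mul hp.continuous).sub
      (hp.continuous.mul (hp.continuous_deriv le_rfl))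
  have hp' : ∀ t, HasDerivAt p (deriv p t) t :=
    fun t => (hp.differentiable one_ne_zero t).hasDerivAt
  have hd : ∀ t, deriv p t = deriv p t * p t + p t * deriv p t := by
    intro t
    have h1 : HasDerivAt (fun s => p s * p s) (deriv p t * p t + p t * deriv p t) t :=
      (hp' t).mul (hp' t)
    have h2 : (fun s => p s * p s) = p := funext hidem
    rw [h2] at h1
    exact (hp' t).unique h1
  -- first identity
  have hf1 : ∀ t, HasDerivAt (fun s => p s * v s) (G t * (p t * v t)) t := by
    intro t
    have := (hp' t).mul (hv t)
    rwa [idem_aux (p t) (deriv p t) (v t) (hidem t) (hd t)] at this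
  have e1 : ∀ t, p t * v t = v t :=
    ode_unique_lin G hG _ v hf1 hv
      (by rw [hv0, hidem 0])
  -- second identity
  have hf2 : ∀ t, HasDerivAt (fun s => v s * p 0) (G t * (v t * p 0)) t := by
    intro t
    have := (hv t).mul_const (p 0)
    rwa [mul_assoc] at this
  have e2 : ∀ t, v t * p 0 = v t :=
    ode_unique_lin G hG _ v hf2 hv
      (by rw [hv0, hidem 0])
  exact fun t => ⟨e1 t, e2 t⟩
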